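/- A $d$-dimensional array of real-valued random variables $\{X_{\mathbf{n}}, \mathbf{n}\in\mathbb{Z}^d_+\}$ is uniformly integrable in the Cesàro sense if and only if (i) $\sup_{\mathbf{n}\succ\mathbf{1}}|\mathbf{n}|^{-1}\sum_{\mathbf{i}\prec\mathbf{n}}\mathbb{E}|X_{\mathbf{i}}| < \infty$, and (ii) for every $\varepsilon>0$ there exists $\delta>0$ such that for every array of events $\{A_{\mathbf{n}}\}$ with $\sup_{\mathbf{n}\succ\mathbf{1}}|\mathbf{n}|^{-1}\sum_{\mathbf{i}\prec\mathbf{n}}\mathbb{P}(A_{\mathbf{i}})<\delta$, one has $\sup_{\mathbf{n}\succ\mathbf{1}}|\mathbf{n}|^{-1}\sum_{\mathbf{i}\prec\mathbf{n}}\mathbb{E}(|X_{\mathbf{i}}|\mathbf{1}(A_{\mathbf{i}}))<\varepsilon$. -/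

import Mathlib

open MeasureTheory Finset

section Aux
set_option linter.unusedSectionVars false
variable {Ω : Type*} [MeasurableSpace Ω] {P : Measure Ω} [IsProbabilityMeasure P]

lemma cesaroAux_nonneg (f : Ω → ℝ) (A : Set Ω) :
    0 ≤ ∫ ω, Set.indicator A (fun ω => |f ω|) ω ∂P :=
  integral_nonneg fun ω => Set.indicator_nonneg (fun _ _ => abs_nonneg _) ω

lemma cesaroAux_tail_int (f : Ω → ℝ) (hf : Measurable f) (hi : Integrable f P) (a : ℝ) :
    Integrable (fun ω => Set.indicator {ω | a < |f ω|} (fun ω => |f ω|) ω) P :=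
  hi.abs.indicator (measurableSet_lt measurable_const hf.abs)

/-- E(|f| 1_A) ≤ a P(A) + E(|f| 1_{|f|>a}) -/
lemma cesaroAux_bound (f : Ω → ℝ) (hf : Measurable f) (hi : Integrable f P)
    (A : Set Ω) (hA : MeasurableSet A) (a : ℝ) (ha : 0 ≤ a) :
    ∫ ω, Set.indicator A (fun ω => |f ω|) ω ∂P ≤
      a * (P A).toReal + ∫ ω, Set.indicator {ω | a < |f ω|} (fun ω => |f ω|) ω ∂P := by
  have h1 : Integrable (fun ω => Set.indicator A (fun ω => |f ω|) ω) P := hi.abs.indicator hA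
  have h2 := cesaroAux_tail_int f hf hi a (P := P)
  have h3 : Integrable (fun ω => a * Set.indicator A (1 : Ω → ℝ) ω) P :=
    ((integrable_const (1 : ℝ)).indicator hA).const_mul a
  have hmono : ∀ ω, Set.indicator A (fun ω => |f ω|) ω ≤
      a * Set.indicator A (1 : Ω → ℝ) ω
        + Set.indicator {ω | a < |f ω|} (fun ω => |f ω|) ω := by
    intro ω
    by_cases hω : ω ∈ A
    · rw [Set.indicator_of_mem hω]
      by_cases h' : a < |f ω|
      · rw [Set.indicator_of_mem (show ω ∈ {ω | a < |f ω|} from h') (fun ω => |f ω|),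
          Set.indicator_of_mem hω]
        simp only [Pi.one_apply, mul_one]
        linarith
      · push_neg at h'
        calc |f ω| ≤ a := h'
        _ ≤ a * Set.indicator A (1 : Ω → ℝ) ω + _ := by
            rw [Set.indicator_of_mem hω]
            simp only [Pi.one_apply, mul_one]
            have : 0 ≤ Set.indicator {ω | a < |f ω|} (fun ω => |f ω|) ω :=
              Set.indicator_nonneg (fun _ _ => abs_nonneg _) ω
            linarith
    · rw [Set.indicator_of_notMem hω]
      have h4 : 0 ≤ Set.indicator {ω | a < |f ω|} (fun ω => |f ω|) ω :=
        Set.indicator_nonneg (fun _ _ => abs_nonneg _) ω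
      have h5 : a * Set.indicator A (1 : Ω → ℝ) ω = 0 := by
        rw [Set.indicator_of_notMem hω, mul_zero]
      linarith
  calc ∫ ω, Set.indicator A (fun ω => |f ω|) ω ∂P
      ≤ ∫ ω, (a * Set.indicator A (1 : Ω → ℝ) ω
          + Set.indicator {ω | a < |f ω|} (fun ω => |f ω|) ω) ∂P :=
        integral_mono h1 (h3.add h2) hmono
    _ = a * (P A).toReal + ∫ ω, Set.indicator {ω | a < |f ω|} (fun ω => |f ω|) ω ∂P := by
        rw [integral_add h3 h2, integral_const_mul, integral_indicator_one hA, measureReal_def]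

/-- E|f| ≤ a + tail -/
lemma cesaroAux_bound2 (f : Ω → ℝ) (hf : Measurable f) (hi : Integrable f P)
    (a : ℝ) (ha : 0 ≤ a) :
    ∫ ω, |f ω| ∂P ≤ a + ∫ ω, Set.indicator {ω | a < |f ω|} (fun ω => |f ω|) ω ∂P := by
  have h2 := cesaroAux_tail_int f hf hi a (P := P)
  have hmono : ∀ ω, |f ω| ≤ a + Set.indicator {ω | a < |f ω|} (fun ω => |f ω|) ω := by
    intro ω
    by_cases h' : a < |f ω|
    · rw [Set.indicator_of_mem (show ω ∈ {ω | a < |f ω|} from h') (fun ω => |f ω|)]; linarith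
    · push_neg at h'
      have : 0 ≤ Set.indicator {ω | a < |f ω|} (fun ω => |f ω|) ω :=
        Set.indicator_nonneg (fun _ _ => abs_nonneg _) ω
      linarith
  calc ∫ ω, |f ω| ∂P ≤ ∫ ω, (a + Set.indicator {ω | a < |f ω|} (fun ω => |f ω|) ω) ∂P :=
        integral_mono hi.abs ((integrable_const a).add h2) hmono
    _ = a + _ := by rw [integral_add (integrable_const a) h2, integral_const]; simp

/-- Markov: b * P(b < |f|) ≤ E|f| -/
lemma cesaroAux_markov (f : Ω → ℝ) (hf : Measurable f) (hi : Integrable f P)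
    (b : ℝ) (hb : 0 ≤ b) :
    b * (P {ω | b < |f ω|}).toReal ≤ ∫ ω, |f ω| ∂P := by
  have hA : MeasurableSet {ω | b < |f ω|} := measurableSet_lt measurable_const hf.abs
  have h3 : Integrable (fun ω => b * Set.indicator {ω | b < |f ω|} (1 : Ω → ℝ) ω) P :=
    ((integrable_const (1 : ℝ)).indicator hA).const_mul b
  have hmono : ∀ ω, b * Set.indicator {ω | b < |f ω|} (1 : Ω → ℝ) ω ≤ |f ω| := by
    intro ω
    by_cases h' : b < |f ω|
    · rw [Set.indicator_of_mem (show ω ∈ {ω | b < |f ω|} from h') (1 : Ω → ℝ)]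
      simp only [Pi.one_apply, mul_one]; linarith
    · rw [Set.indicator_of_notMem (show ω ∉ {ω | b < |f ω|} from h') (1 : Ω → ℝ), mul_zero]
      exact abs_nonneg _
  have := integral_mono h3 hi.abs hmono
  rwa [integral_const_mul, integral_indicator_one hA, measureReal_def] at this

end Aux

lemma cesaroAux_card (d : ℕ) (n : Fin d → ℕ) (hn : ∀ j, 1 ≤ n j) :
    ((Finset.Icc (1 : Fin d → ℕ) n).card : ℝ) = ∏ j, (n j : ℝ) := by
  rw [Pi.card_Icc]
  norm_cast
  exact Finset.prod_congr rfl fun j _ => by simp [Nat.card_Icc, Pi.one_apply]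

theorem cesaro_ui_criterion
    {Ω : Type*} [MeasurableSpace Ω]
    (P : Measure Ω) [IsProbabilityMeasure P]
    (d : ℕ) (hd : 0 < d)
    (X : (Fin d → ℕ) → Ω → ℝ)
    (hmeas : ∀ i, Measurable (X i))
    (hint : ∀ i, Integrable (X i) P) :
    -- Cesàro uniform integrability
    (∀ ε > (0 : ℝ), ∃ a : ℝ, 0 < a ∧ ∀ b ≥ a, ∀ n : Fin d → ℕ, (∀ j, 1 ≤ n j) →
        (1 / ∏ j, (n j : ℝ)) * ∑ i ∈ Finset.Icc 1 n,
          ∫ ω, Set.indicator {ω | b < |X i ω|} (fun ω => |X i ω|) ω ∂P ≤ ε)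
    ↔
    -- (i) Cesàro boundedness in L¹
    ((∃ M : ℝ, ∀ n : Fin d → ℕ, (∀ j, 1 ≤ n j) →
        (1 / ∏ j, (n j : ℝ)) * ∑ i ∈ Finset.Icc 1 n, ∫ ω, |X i ω| ∂P ≤ M) ∧
    -- (ii) uniform absolute continuity in the Cesàro sense
      (∀ ε > (0 : ℝ), ∃ δ > (0 : ℝ), ∀ A : (Fin d → ℕ) → Set Ω,
        (∀ i, MeasurableSet (A i)) →
        (∀ n : Fin d → ℕ, (∀ j, 1 ≤ n j) →
          (1 / ∏ j, (n j : ℝ)) * ∑ i ∈ Finset.Icc 1 n, (P (A i)).toReal < δ) →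
        ∀ n : Fin d → ℕ, (∀ j, 1 ≤ n j) →
          (1 / ∏ j, (n j : ℝ)) * ∑ i ∈ Finset.Icc 1 n,
            ∫ ω, Set.indicator (A i) (fun ω => |X i ω|) ω ∂P < ε)) := by
  constructor
  · intro h
    constructor
    · -- (i)
      obtain ⟨a, hapos, ha⟩ := h 1 one_pos
      refine ⟨a + 1, fun n hn => ?_⟩
      have hN : (0:ℝ) < ∏ j, (n j : ℝ) :=
        Finset.prod_pos fun j _ => by exact_mod_cast Nat.lt_of_lt_of_le Nat.zero_lt_one (hn j)
      have hc := cesaroAux_card d n hn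
      have hsum : ∑ i ∈ Finset.Icc 1 n, ∫ ω, |X i ω| ∂P ≤
          ∑ i ∈ Finset.Icc 1 n, (a + ∫ ω, Set.indicator {ω | a < |X i ω|}
            (fun ω => |X i ω|) ω ∂P) :=
        Finset.sum_le_sum fun i _ => cesaroAux_bound2 (X i) (hmeas i) (hint i) a hapos.le
      calc (1 / ∏ j, (n j : ℝ)) * ∑ i ∈ Finset.Icc 1 n, ∫ ω, |X i ω| ∂P
          ≤ (1 / ∏ j, (n j : ℝ)) * ∑ i ∈ Finset.Icc 1 n,
            (a + ∫ ω, Set.indicator {ω | a < |X i ω|} (fun ω => |X i ω|) ω ∂P) :=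
            mul_le_mul_of_nonneg_left hsum (by positivity)
        _ = a + (1 / ∏ j, (n j : ℝ)) * ∑ i ∈ Finset.Icc 1 n,
            ∫ ω, Set.indicator {ω | a < |X i ω|} (fun ω => |X i ω|) ω ∂P := by
            rw [Finset.sum_add_distrib, Finset.sum_const, nsmul_eq_mul, hc, mul_add,
              ← mul_assoc, one_div_mul_cancel hN.ne', one_mul]
        _ ≤ a + 1 := add_le_add_right (ha a le_rfl n hn) a
    · -- (ii)
      intro ε hε
      obtain ⟨a, hapos, ha⟩ := h (ε / 2) (by positivity)
      refine ⟨ε / (2 * a), by positivity, fun A hAm hAsmall n hn => ?_⟩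
      have hN : (0:ℝ) < ∏ j, (n j : ℝ) :=
        Finset.prod_pos fun j _ => by exact_mod_cast Nat.lt_of_lt_of_le Nat.zero_lt_one (hn j)
      have hsum : ∑ i ∈ Finset.Icc 1 n, ∫ ω, Set.indicator (A i) (fun ω => |X i ω|) ω ∂P ≤
          ∑ i ∈ Finset.Icc 1 n, (a * (P (A i)).toReal +
            ∫ ω, Set.indicator {ω | a < |X i ω|} (fun ω => |X i ω|) ω ∂P) :=
        Finset.sum_le_sum fun i _ =>
          cesaroAux_bound (X i) (hmeas i) (hint i) (A i) (hAm i) a hapos.le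
      calc (1 / ∏ j, (n j : ℝ)) * ∑ i ∈ Finset.Icc 1 n,
            ∫ ω, Set.indicator (A i) (fun ω => |X i ω|) ω ∂P
          ≤ (1 / ∏ j, (n j : ℝ)) * ∑ i ∈ Finset.Icc 1 n, (a * (P (A i)).toReal +
              ∫ ω, Set.indicator {ω | a < |X i ω|} (fun ω => |X i ω|) ω ∂P) :=
            mul_le_mul_of_nonneg_left hsum (by positivity)
        _ = a * ((1 / ∏ j, (n j : ℝ)) * ∑ i ∈ Finset.Icc 1 n, (P (A i)).toReal)
            + (1 / ∏ j, (n j : ℝ)) * ∑ i ∈ Finset.Icc 1 n,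
              ∫ ω, Set.indicator {ω | a < |X i ω|} (fun ω => |X i ω|) ω ∂P := by
            rw [Finset.sum_add_distrib, ← Finset.mul_sum, mul_add]; ring
        _ < a * (ε / (2 * a)) + ε / 2 :=
            add_lt_add_of_lt_of_le
              (mul_lt_mul_of_pos_left (hAsmall n hn) hapos) (ha a le_rfl n hn)
        _ = ε := by field_simp; ring
  · rintro ⟨⟨M, hM⟩, hii⟩ ε hε
    obtain ⟨δ, hδpos, hδ⟩ := hii ε hε
    refine ⟨max 1 (M / δ + 1), lt_of_lt_of_le one_pos (le_max_left _ _), fun b hb n hn => ?_⟩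
    have hb1 : (1:ℝ) ≤ b := le_trans (le_max_left _ _) hb
    have hbpos : (0:ℝ) < b := lt_of_lt_of_le one_pos hb1
    have h3 : M / δ + 1 ≤ b := le_trans (le_max_right _ _) hb
    have hbM : M < δ * b := by
      rw [mul_comm]; exact (div_lt_iff₀ hδpos).1 (by linarith)
    have hsmall : ∀ m : Fin d → ℕ, (∀ j, 1 ≤ m j) →
        (1 / ∏ j, (m j : ℝ)) * ∑ i ∈ Finset.Icc 1 m,
          (P {ω | b < |X i ω|}).toReal < δ := by
      intro m hm
      have hNm : (0:ℝ) < ∏ j, (m j : ℝ) :=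
        Finset.prod_pos fun j _ => by exact_mod_cast Nat.lt_of_lt_of_le Nat.zero_lt_one (hm j)
      have h1 : b * ((1 / ∏ j, (m j : ℝ)) * ∑ i ∈ Finset.Icc 1 m,
          (P {ω | b < |X i ω|}).toReal) ≤
          (1 / ∏ j, (m j : ℝ)) * ∑ i ∈ Finset.Icc 1 m, ∫ ω, |X i ω| ∂P := by
        rw [← mul_assoc, mul_comm b, mul_assoc]
        refine mul_le_mul_of_nonneg_left ?_ (by positivity)
        rw [Finset.mul_sum]
        exact Finset.sum_le_sum fun i _ =>
          cesaroAux_markov (X i) (hmeas i) (hint i) b hbpos.le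
      have h2 := hM m hm
      by_contra hcon
      push_neg at hcon
      have hp : (0:ℝ) ≤ (1 / ∏ j, (m j : ℝ)) * ∑ i ∈ Finset.Icc 1 m,
          (P {ω | b < |X i ω|}).toReal := by
        apply mul_nonneg (by positivity)
        exact Finset.sum_nonneg fun i _ => ENNReal.toReal_nonneg
      nlinarith
    have := hδ (fun i => {ω | b < |X i ω|})
      (fun i => measurableSet_lt measurable_const (hmeas i).abs) hsmall n hn
    exact this.le
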